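/- For any integers a and m with m ≠ 0, the sequence of powers a^0, a^1, a^2, … is eventually periodic modulo m, with period dividing φ(m_s) and preperiod at most s, where s and m_s come from the gcd recursion. -/
import Mathlib

def dm (a : ℤ) (m : ℕ) : ℕ → ℕ × ℕ
  | 0 => (Int.gcd a m, m / Int.gcd a m)
  | i + 1 =>
      let p := dm a m i
      let d := Nat.gcd p.1 p.2
      (d, p.2 / d)

lemma dm_fst_succ (a : ℤ) (n i : ℕ) :
    (dm a n (i+1)).1 = Nat.gcd (dm a n i).1 (dm a n i).2 := rfl

lemma dm_snd_succ (a : ℤ) (n i : ℕ) :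
    (dm a n (i+1)).2 = (dm a n i).2 / (dm a n (i+1)).1 := rfl

lemma dm_mul_succ (a : ℤ) (n i : ℕ) :
    (dm a n (i+1)).2 * (dm a n (i+1)).1 = (dm a n i).2 := by
  rw [dm_snd_succ]
  exact Nat.div_mul_cancel (dm_fst_succ a n i ▸ Nat.gcd_dvd_right _ _)

lemma dm_fst_zero (a : ℤ) (n : ℕ) : (dm a n 0).1 = Nat.gcd a.natAbs n := by
  show Int.gcd a n = _
  simp [Int.gcd]

lemma dm_mul_zero (a : ℤ) (n : ℕ) : (dm a n 0).2 * (dm a n 0).1 = n := by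
  show n / Int.gcd a n * Int.gcd a n = n
  refine Nat.div_mul_cancel ?_
  have : Int.gcd a n = Nat.gcd a.natAbs n := by simp [Int.gcd]
  rw [this]; exact Nat.gcd_dvd_right _ _

lemma dm_prod (a : ℤ) (n : ℕ) :
    ∀ i, (dm a n i).2 * ∏ j ∈ Finset.range (i+1), (dm a n j).1 = n
  | 0 => by simpa using dm_mul_zero a n
  | i+1 => by
    rw [Finset.prod_range_succ]
    calc (dm a n (i+1)).2 * ((∏ j ∈ Finset.range (i+1), (dm a n j).1) * (dm a n (i+1)).1)
        = ((dm a n (i+1)).2 * (dm a n (i+1)).1) * ∏ j ∈ Finset.range (i+1), (dm a n j).1 := by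
          ring
      _ = (dm a n i).2 * ∏ j ∈ Finset.range (i+1), (dm a n j).1 := by rw [dm_mul_succ]
      _ = n := dm_prod a n i

lemma dm_fst_dvd (a : ℤ) (n : ℕ) : ∀ i, (dm a n i).1 ∣ a.natAbs
  | 0 => by rw [dm_fst_zero]; exact Nat.gcd_dvd_left _ _
  | i+1 => (dm_fst_succ a n i ▸ Nat.gcd_dvd_left _ _).trans (dm_fst_dvd a n i)

lemma dm_gcd_dvd (a : ℤ) (n : ℕ) :
    ∀ i, Nat.gcd a.natAbs (dm a n i).2 ∣ (dm a n i).1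
  | 0 => by
    rw [dm_fst_zero]
    exact Nat.dvd_gcd (Nat.gcd_dvd_left _ _)
      ((Nat.gcd_dvd_right _ _).trans ⟨(dm a n 0).1, (dm_mul_zero a n).symm⟩)
  | i+1 => by
    rw [dm_fst_succ]
    have hMdvd : (dm a n (i+1)).2 ∣ (dm a n i).2 := ⟨_, (dm_mul_succ a n i).symm⟩
    refine Nat.dvd_gcd ?_ ((Nat.gcd_dvd_right _ _).trans hMdvd)
    exact (Nat.dvd_gcd (Nat.gcd_dvd_left _ _)
      ((Nat.gcd_dvd_right _ _).trans hMdvd)).trans (dm_gcd_dvd a n i)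

theorem stmt19 (a m : ℤ) (hm : m ≠ 0) (s : ℕ)
    (hs : (dm a m.natAbs s).1 = 1) (hleast : ∀ t < s, (dm a m.natAbs t).1 ≠ 1) :
    ∀ k : ℕ, s ≤ k → a ^ (k + Nat.totient (dm a m.natAbs s).2) ≡ a ^ k [ZMOD m] := by
  intro k hk
  set n := m.natAbs with hn
  set M := (dm a n s).2 with hM
  set φ := Nat.totient M with hφ
  -- n ≠ 0
  have hn0 : n ≠ 0 := Int.natAbs_ne_zero.mpr hm
  have hprod := dm_prod a n s
  have hM0 : M ≠ 0 := by
    intro h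
    apply hn0
    rw [← hprod, ← hM, h, zero_mul]
  haveI : NeZero M := ⟨hM0⟩
  -- coprimality
  have hcop : Nat.Coprime a.natAbs M := by
    have := dm_gcd_dvd a n s
    rw [hs] at this
    exact Nat.dvd_one.mp this
  -- Euler: (a : ZMod M)^φ = 1
  have hunit : IsUnit ((a : ℤ) : ZMod M) := by
    have h1 : IsUnit ((a.natAbs : ZMod M)) :=
      (ZMod.isUnit_iff_coprime a.natAbs M).mpr hcop
    rcases Int.natAbs_eq a with h | h
    · rw [h, Int.cast_natCast]; exact h1
    · rw [h, Int.cast_neg, Int.cast_natCast]; exact h1.neg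
  have heuler : ((a : ℤ) : ZMod M) ^ φ = 1 := by
    have := ZMod.pow_totient hunit.unit
    calc ((a : ℤ) : ZMod M) ^ φ = ((hunit.unit : (ZMod M)ˣ) : ZMod M) ^ φ := by
          rw [hunit.unit_spec]
      _ = ((hunit.unit ^ φ : (ZMod M)ˣ) : ZMod M) := by push_cast; ring
      _ = 1 := by rw [hφ, this]; rfl
  have hMdvd : (M : ℤ) ∣ a ^ φ - 1 := by
    rw [← ZMod.intCast_zmod_eq_zero_iff_dvd]
    push_cast
    rw [heuler]; ring
  -- divisor part: P ∣ a^k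
  have hPdvd : ((∏ j ∈ Finset.range (s+1), (dm a n j).1 : ℕ) : ℤ) ∣ a ^ k := by
    push_cast
    rw [Finset.prod_range_succ, hs, Nat.cast_one, mul_one]
    have h1 : ∏ j ∈ Finset.range s, ((dm a n j).1 : ℤ) ∣ ∏ _j ∈ Finset.range s, a := by
      refine Finset.prod_dvd_prod_of_dvd _ _ ?_
      intro j _
      have := dm_fst_dvd a n j
      exact (Int.natCast_dvd_natCast.mpr this).trans (Int.natAbs_dvd.mpr dvd_rfl)
    rw [Finset.prod_const, Finset.card_range] at h1
    exact h1.trans (pow_dvd_pow a hk)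
  -- combine
  have hdvd : (n : ℤ) ∣ a ^ (k + φ) - a ^ k := by
    have : ((M : ℤ) * ((∏ j ∈ Finset.range (s+1), (dm a n j).1 : ℕ) : ℤ)) ∣ (a ^ φ - 1) * a ^ k :=
      mul_dvd_mul hMdvd hPdvd
    rw [← Nat.cast_mul, hprod] at this
    have heq : a ^ (k + φ) - a ^ k = (a ^ φ - 1) * a ^ k := by ring
    rw [heq]; exact this
  have : m ∣ a ^ (k + φ) - a ^ k := Int.natAbs_dvd.mp (hn ▸ hdvd)
  exact (Int.modEq_iff_dvd.mpr (by simpa using this.neg_right))
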